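/- Let n ≥ 2, m ≥ 1, and let 𝒬 be a nonempty family of functions Q : {1,…,m} × {1,…,n}² → [0,1]. For a sample S = (ω_1, …, ω_m) of subsets of {1,…,n}, each with nonempty complement ω̄_i, define the empirical Rademacher average f(S) = 2 · (1/2^m) Σ_{ν ∈ {−1,+1}^m} sup_{Q ∈ 𝒬} (1/m) Σ_{i=1}^m (ν_i/(|ω_i||ω̄_i|)) Σ_{p ∈ ω_i} Σ_{q ∈ ω̄_i} Q(i, p, q). Fix a user a, items b ∈ ω_a and b' ∈ ω̄_a, and let Ŝ_ab replace ω_a by ω_a' = (ω_a \ {b}) ∪ {b'}, leaving all other ω_i unchanged. Then | f(S) − f(Ŝ_ab) | ≤ 2(n−1)/(m |ω_a||ω̄_a|). -/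

import Mathlib

open Finset

/-- The empirical Rademacher average
`f(S) = 2·(1/2^m) Σ_{ν∈{−1,+1}^m} sup_{Q∈𝒬} (1/m) Σ_i (ν_i/(|ω_i||ω̄_i|))
  Σ_{p∈ω_i} Σ_{q∈ω̄_i} Q(i,p,q)`
of a function class `𝒬` over the sample `S = (ω_1, …, ω_m)`; sign vectors
`ν ∈ {−1,+1}^m` are encoded by Boolean vectors `ε : Fin m → Bool`. -/
noncomputable def radAvg {m n : ℕ} (𝒬 : Set (Fin m → Fin n → Fin n → ℝ))
    (ω : Fin m → Finset (Fin n)) : ℝ :=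
  2 * ((1 / (2 : ℝ) ^ m) * ∑ ε : Fin m → Bool,
    sSup {t : ℝ | ∃ Q ∈ 𝒬, t = (1 / (m : ℝ)) *
      ∑ i, ((if ε i then (1 : ℝ) else -1) /
          (((ω i).card : ℝ) * (((ω i)ᶜ).card : ℝ))) *
        ∑ p ∈ ω i, ∑ q ∈ (ω i)ᶜ, Q i p q})

/-- Bounded-difference property of the empirical Rademacher average: replacing in the
sample the positive set `ω_a` by `ω_a' = (ω_a \ {b}) ∪ {b'}` (for `b ∈ ω_a`,
`b' ∈ ω̄_a`) changes `f(S)` by at most `2(n−1)/(m|ω_a||ω̄_a|)`. -/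
lemma csSup_image_abs_sub_le {α : Type*} {s : Set α} (hs : s.Nonempty)
    (g g' : α → ℝ) (c : ℝ)
    (hbdd : BddAbove (g '' s)) (hbdd' : BddAbove (g' '' s))
    (h : ∀ x ∈ s, |g x - g' x| ≤ c) :
    |sSup (g '' s) - sSup (g' '' s)| ≤ c := by
  rw [abs_sub_le_iff]
  constructor
  · rw [sub_le_iff_le_add]
    apply csSup_le (hs.image g)
    rintro t ⟨x, hx, rfl⟩
    have h1 := (abs_sub_le_iff.mp (h x hx)).1
    have h2 : g' x ≤ sSup (g' '' s) := le_csSup hbdd' ⟨x, hx, rfl⟩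
    linarith
  · rw [sub_le_iff_le_add]
    apply csSup_le (hs.image g')
    rintro t ⟨x, hx, rfl⟩
    have h1 := (abs_sub_le_iff.mp (h x hx)).2
    have h2 : g x ≤ sSup (g '' s) := le_csSup hbdd ⟨x, hx, rfl⟩
    linarith

noncomputable def gfun (m n : ℕ) (ω : Fin m → Finset (Fin n)) (ε : Fin m → Bool)
    (Q : Fin m → Fin n → Fin n → ℝ) : ℝ :=
  (1 / (m : ℝ)) * ∑ i, ((if ε i then (1 : ℝ) else -1) /
      (((ω i).card : ℝ) * (((ω i)ᶜ).card : ℝ))) *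
    ∑ p ∈ ω i, ∑ q ∈ (ω i)ᶜ, Q i p q

lemma radAvg_eq {m n : ℕ} (𝒬 : Set (Fin m → Fin n → Fin n → ℝ))
    (ω : Fin m → Finset (Fin n)) :
    radAvg 𝒬 ω = 2 * ((1 / (2 : ℝ) ^ m) * ∑ ε : Fin m → Bool,
      sSup (gfun m n ω ε '' 𝒬)) := by
  unfold radAvg
  congr 2
  apply Finset.sum_congr rfl
  intro ε _
  congr 1
  ext t
  constructor
  · rintro ⟨Q, hQ, rfl⟩
    exact ⟨Q, hQ, rfl⟩
  · rintro ⟨Q, hQ, rfl⟩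
    exact ⟨Q, hQ, rfl⟩

lemma gfun_le_one {m n : ℕ} (ω : Fin m → Finset (Fin n)) (ε : Fin m → Bool)
    (Q : Fin m → Fin n → Fin n → ℝ)
    (hQ : ∀ i p q, Q i p q ∈ Set.Icc (0 : ℝ) 1) : gfun m n ω ε Q ≤ 1 := by
  unfold gfun
  have hterm : ∀ i : Fin m, ((if ε i then (1 : ℝ) else -1) /
      (((ω i).card : ℝ) * (((ω i)ᶜ).card : ℝ))) *
      (∑ p ∈ ω i, ∑ q ∈ (ω i)ᶜ, Q i p q) ≤ 1 := by
    intro i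
    have hS0 : (0:ℝ) ≤ ∑ p ∈ ω i, ∑ q ∈ (ω i)ᶜ, Q i p q :=
      Finset.sum_nonneg fun p _ => Finset.sum_nonneg fun q _ => (hQ i p q).1
    have hS1 : ∑ p ∈ ω i, ∑ q ∈ (ω i)ᶜ, Q i p q ≤ ((ω i).card : ℝ) * (((ω i)ᶜ).card : ℝ) := by
      calc ∑ p ∈ ω i, ∑ q ∈ (ω i)ᶜ, Q i p q
          ≤ ∑ p ∈ ω i, (((ω i)ᶜ).card : ℝ) := by
            apply Finset.sum_le_sum
            intro p _
            calc ∑ q ∈ (ω i)ᶜ, Q i p q ≤ ∑ q ∈ (ω i)ᶜ, (1:ℝ) :=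
                  Finset.sum_le_sum fun q _ => (hQ i p q).2
              _ = (((ω i)ᶜ).card : ℝ) := by simp
        _ = ((ω i).card : ℝ) * (((ω i)ᶜ).card : ℝ) := by simp [mul_comm]
    rcases le_or_gt (((ω i).card : ℝ) * (((ω i)ᶜ).card : ℝ)) 0 with hkl | hkl
    · -- degenerate: card product ≤ 0 means it's 0 (cards nonneg)
      have : ((ω i).card : ℝ) * (((ω i)ᶜ).card : ℝ) = 0 := le_antisymm hkl (by positivity)
      rw [this]
      simp
    · by_cases hε : ε i
      · simp only [hε, if_true]
        rw [div_mul_eq_mul_div, one_mul, div_le_one hkl]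
        exact hS1
      · simp only [hε, Bool.false_eq_true, if_false]
        have hneg : (-1 : ℝ) / (((ω i).card : ℝ) * (((ω i)ᶜ).card : ℝ)) ≤ 0 :=
          div_nonpos_of_nonpos_of_nonneg (by norm_num) hkl.le
        have h1 := mul_nonpos_of_nonpos_of_nonneg hneg hS0
        linarith
  rcases Nat.eq_zero_or_pos m with hm | hm
  · subst hm; simp [gfun]
  · have hmR : (0:ℝ) < m := by exact_mod_cast hm
    calc (1 / (m : ℝ)) * ∑ i, _ ≤ (1 / (m : ℝ)) * ∑ _i : Fin m, (1:ℝ) := by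
          apply mul_le_mul_of_nonneg_left (Finset.sum_le_sum fun i _ => hterm i) (by positivity)
      _ = 1 := by field_simp; simp

lemma gfun_sub_abs_le (m n : ℕ)
    (ω : Fin m → Finset (Fin n)) (hω : ∀ i, (ω i).Nonempty) (hωc : ∀ i, ((ω i)ᶜ).Nonempty)
    (a : Fin m) (b b' : Fin n) (hb : b ∈ ω a) (hb' : b' ∈ (ω a)ᶜ)
    (ε : Fin m → Bool) (Q : Fin m → Fin n → Fin n → ℝ)
    (hQ : ∀ i p q, Q i p q ∈ Set.Icc (0 : ℝ) 1) :
    |gfun m n ω ε Q - gfun m n (Function.update ω a (insert b' ((ω a).erase b))) ε Q|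
      ≤ ((n : ℝ) - 1) / ((m : ℝ) * ((ω a).card : ℝ) * (((ω a)ᶜ).card : ℝ)) := by
  have hb'n : b' ∉ ω a := Finset.mem_compl.mp hb'
  have hbb' : b ≠ b' := fun h => hb'n (h ▸ hb)
  have hnotmem : b' ∉ (ω a).erase b := fun h => hb'n (Finset.mem_of_mem_erase h)
  have hbc : b ∉ (ω a)ᶜ := by simp [hb]
  have hnotmem' : b ∉ ((ω a)ᶜ).erase b' := fun h => hbc (Finset.mem_of_mem_erase h)
  have hcard : (insert b' ((ω a).erase b)).card = (ω a).card := by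
    rw [Finset.card_insert_of_notMem hnotmem, Finset.card_erase_of_mem hb]
    have := (hω a).card_pos
    omega
  have hcompl : (insert b' ((ω a).erase b))ᶜ = insert b (((ω a)ᶜ).erase b') := by
    ext x
    simp only [Finset.mem_compl, Finset.mem_insert, Finset.mem_erase]
    by_cases hxb : x = b <;> by_cases hxb' : x = b' <;> simp_all
  have hcardc : ((insert b' ((ω a).erase b))ᶜ).card = ((ω a)ᶜ).card := by
    rw [hcompl, Finset.card_insert_of_notMem hnotmem', Finset.card_erase_of_mem hb']
    have := (hωc a).card_pos
    omega
  set kR : ℝ := ((ω a).card : ℝ) with hkR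
  set lR : ℝ := (((ω a)ᶜ).card : ℝ) with hlR
  have hk1 : (1 : ℝ) ≤ kR := by rw [hkR]; exact_mod_cast (hω a).card_pos
  have hl1 : (1 : ℝ) ≤ lR := by rw [hlR]; exact_mod_cast (hωc a).card_pos
  have hkl : kR + lR = n := by
    rw [hkR, hlR]
    have h := Finset.card_add_card_compl (ω a)
    rw [Fintype.card_fin] at h
    exact_mod_cast h
  -- sums
  set S : ℝ := ∑ p ∈ ω a, ∑ q ∈ (ω a)ᶜ, Q a p q with hSdef
  set S' : ℝ := ∑ p ∈ insert b' ((ω a).erase b),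
      ∑ q ∈ (insert b' ((ω a).erase b))ᶜ, Q a p q with hS'def
  set C : ℝ := ∑ p ∈ (ω a).erase b, ∑ q ∈ ((ω a)ᶜ).erase b', Q a p q with hCdef
  set R1 : ℝ := ∑ p ∈ (ω a).erase b, Q a p b' with hR1
  set R2 : ℝ := ∑ q ∈ (ω a)ᶜ, Q a b q with hR2
  set R3 : ℝ := ∑ p ∈ (ω a).erase b, Q a p b with hR3
  set R4 : ℝ := ∑ q ∈ insert b (((ω a)ᶜ).erase b'), Q a b' q with hR4
  have hS : S = C + R1 + R2 := by
    rw [hSdef, ← Finset.sum_erase_add _ _ hb]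
    congr 1
    rw [hCdef, hR1, ← Finset.sum_add_distrib]
    apply Finset.sum_congr rfl
    intro p _
    rw [← Finset.sum_erase_add _ _ hb']
  have hS' : S' = C + R3 + R4 := by
    rw [hS'def, Finset.sum_insert hnotmem, hcompl]
    rw [add_comm]
    congr 1
    rw [hCdef, hR3, ← Finset.sum_add_distrib]
    apply Finset.sum_congr rfl
    intro p _
    rw [Finset.sum_insert hnotmem', add_comm]
  -- bounds on the R's
  have hsum_bd : ∀ (s : Finset (Fin n)) (f : Fin n → ℝ), (∀ x, f x ∈ Set.Icc (0:ℝ) 1) →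
      (0 : ℝ) ≤ ∑ x ∈ s, f x ∧ ∑ x ∈ s, f x ≤ (s.card : ℝ) := by
    intro s f hf
    constructor
    · exact Finset.sum_nonneg fun x _ => (hf x).1
    · calc ∑ x ∈ s, f x ≤ ∑ _x ∈ s, (1:ℝ) := Finset.sum_le_sum fun x _ => (hf x).2
        _ = (s.card : ℝ) := by simp
  have hcek : (((ω a).erase b).card : ℝ) = kR - 1 := by
    rw [Finset.card_erase_of_mem hb, hkR]
    have := (hω a).card_pos
    push_cast [Nat.cast_sub this]
    ring
  have hR1b := hsum_bd ((ω a).erase b) (fun p => Q a p b') (fun p => hQ a p b')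
  have hR2b := hsum_bd ((ω a)ᶜ) (fun q => Q a b q) (fun q => hQ a b q)
  have hR3b := hsum_bd ((ω a).erase b) (fun p => Q a p b) (fun p => hQ a p b)
  have hR4b := hsum_bd (insert b (((ω a)ᶜ).erase b')) (fun q => Q a b' q) (fun q => hQ a b' q)
  have hc4 : ((insert b (((ω a)ᶜ).erase b')).card : ℝ) = lR := by
    rw [← hcompl, hcardc]
  have hR1u : R1 ≤ kR - 1 := by rw [hR1, ← hcek]; exact hR1b.2
  have hR3u : R3 ≤ kR - 1 := by rw [hR3, ← hcek]; exact hR3b.2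
  have hR2u : R2 ≤ lR := by rw [hR2, hlR]; exact hR2b.2
  have hR4u : R4 ≤ lR := by rw [hR4, ← hc4]; exact hR4b.2
  have hR1l : 0 ≤ R1 := hR1b.1
  have hR2l : 0 ≤ R2 := hR2b.1
  have hR3l : 0 ≤ R3 := hR3b.1
  have hR4l : 0 ≤ R4 := hR4b.1
  have habsSS' : |S - S'| ≤ (n : ℝ) - 1 := by
    rw [hS, hS', abs_sub_le_iff]
    constructor <;> linarith
  -- difference of gfun
  rcases Nat.eq_zero_or_pos m with hm0 | hm0
  · subst hm0; exact absurd a.2 (by omega)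
  have hmR : (0 : ℝ) < m := by exact_mod_cast hm0
  have hdiff : gfun m n ω ε Q - gfun m n (Function.update ω a (insert b' ((ω a).erase b))) ε Q
      = (1 / (m : ℝ)) * (((if ε a then (1:ℝ) else -1) / (kR * lR)) * (S - S')) := by
    unfold gfun
    rw [← mul_sub, ← Finset.sum_sub_distrib]
    congr 1
    rw [Finset.sum_eq_single_of_mem a (Finset.mem_univ a)]
    · rw [Function.update_self, hcard, hcardc, ← hSdef, ← hS'def, ← hkR, ← hlR]
      ring
    · intro i _ hi
      rw [Function.update_of_ne hi]
      ring
  rw [hdiff, abs_mul, abs_mul]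
  have hklpos : (0:ℝ) < kR * lR := mul_pos (by linarith) (by linarith)
  have habs1 : |(1 : ℝ) / (m : ℝ)| = 1 / (m : ℝ) := abs_of_pos (by positivity)
  have habs2 : |(if ε a then (1:ℝ) else -1) / (kR * lR)| = 1 / (kR * lR) := by
    rw [abs_div]
    congr 1
    · by_cases hε : ε a <;> simp [hε]
    · exact abs_of_pos hklpos
  rw [habs1, habs2]
  have hn1 : (0:ℝ) ≤ (n:ℝ) - 1 := by linarith
  calc (1 / (m:ℝ)) * (1 / (kR * lR) * |S - S'|)
      ≤ (1 / (m:ℝ)) * (1 / (kR * lR) * ((n:ℝ) - 1)) := by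
        apply mul_le_mul_of_nonneg_left _ (by positivity)
        exact mul_le_mul_of_nonneg_left habsSS' (by positivity)
    _ = ((n : ℝ) - 1) / ((m : ℝ) * kR * lR) := by
        ring

theorem radAvg_swap_stability (m n : ℕ) (hm : 1 ≤ m) (hn : 2 ≤ n)
    (𝒬 : Set (Fin m → Fin n → Fin n → ℝ)) (h𝒬 : 𝒬.Nonempty)
    (hrange : ∀ Q ∈ 𝒬, ∀ i p q, Q i p q ∈ Set.Icc (0 : ℝ) 1)
    (ω : Fin m → Finset (Fin n))
    (hω : ∀ i, (ω i).Nonempty) (hωc : ∀ i, ((ω i)ᶜ).Nonempty)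
    (a : Fin m) (b b' : Fin n) (hb : b ∈ ω a) (hb' : b' ∈ (ω a)ᶜ) :
    |radAvg 𝒬 ω - radAvg 𝒬 (Function.update ω a (insert b' ((ω a).erase b)))| ≤
      2 * ((n : ℝ) - 1) / ((m : ℝ) * ((ω a).card : ℝ) * (((ω a)ᶜ).card : ℝ)) := by
  set ω' := Function.update ω a (insert b' ((ω a).erase b)) with hω'
  set c : ℝ := ((n : ℝ) - 1) / ((m : ℝ) * ((ω a).card : ℝ) * (((ω a)ᶜ).card : ℝ)) with hc
  have hk1 : (1 : ℝ) ≤ ((ω a).card : ℝ) := by exact_mod_cast (hω a).card_pos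
  have hl1 : (1 : ℝ) ≤ (((ω a)ᶜ).card : ℝ) := by exact_mod_cast (hωc a).card_pos
  have hmR : (0 : ℝ) < m := by exact_mod_cast hm
  have hnR : (2 : ℝ) ≤ n := by exact_mod_cast hn
  have hc0 : 0 ≤ c := by
    rw [hc]
    apply div_nonneg (by linarith)
    have : (0:ℝ) < (m : ℝ) * ((ω a).card : ℝ) * (((ω a)ᶜ).card : ℝ) := by positivity
    linarith
  have key : ∀ ε : Fin m → Bool,
      |sSup (gfun m n ω ε '' 𝒬) - sSup (gfun m n ω' ε '' 𝒬)| ≤ c := by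
    intro ε
    apply csSup_image_abs_sub_le h𝒬
    · exact ⟨1, by rintro t ⟨Q, hQm, rfl⟩; exact gfun_le_one ω ε Q (hrange Q hQm)⟩
    · exact ⟨1, by rintro t ⟨Q, hQm, rfl⟩; exact gfun_le_one ω' ε Q (hrange Q hQm)⟩
    · intro Q hQm
      exact gfun_sub_abs_le m n ω hω hωc a b b' hb hb' ε Q (hrange Q hQm)
  rw [radAvg_eq, radAvg_eq]
  have h2m : (0:ℝ) < (2:ℝ) ^ m := by positivity
  calc |2 * ((1 / (2:ℝ) ^ m) * ∑ ε : Fin m → Bool, sSup (gfun m n ω ε '' 𝒬)) -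
          2 * ((1 / (2:ℝ) ^ m) * ∑ ε : Fin m → Bool, sSup (gfun m n ω' ε '' 𝒬))|
      = 2 * ((1 / (2:ℝ) ^ m) *
          |∑ ε : Fin m → Bool, sSup (gfun m n ω ε '' 𝒬) -
           ∑ ε : Fin m → Bool, sSup (gfun m n ω' ε '' 𝒬)|) := by
        rw [← mul_sub, ← mul_sub, abs_mul, abs_mul,
          abs_of_nonneg (show (0:ℝ) ≤ 2 by norm_num),
          abs_of_nonneg (show (0:ℝ) ≤ 1 / (2:ℝ) ^ m by positivity)]
    _ ≤ 2 * ((1 / (2:ℝ) ^ m) * ∑ _ε : Fin m → Bool, c) := by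
        apply mul_le_mul_of_nonneg_left _ (by norm_num)
        apply mul_le_mul_of_nonneg_left _ (by positivity)
        rw [← Finset.sum_sub_distrib]
        exact (Finset.abs_sum_le_sum_abs _ _).trans
          (Finset.sum_le_sum fun ε _ => key ε)
    _ = 2 * c := by
        rw [Finset.sum_const]
        simp only [Finset.card_univ, Fintype.card_fun, Fintype.card_bool,
          Fintype.card_fin, nsmul_eq_mul]
        push_cast
        field_simp
    _ = 2 * ((n : ℝ) - 1) / ((m : ℝ) * ((ω a).card : ℝ) * (((ω a)ᶜ).card : ℝ)) := by
        rw [hc, mul_div_assoc]
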